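/- First-order difference of schemes, type I bound: for positive integer n and a := Δt‖W_s‖, B̄ ≥ 0, the sum Σ_{m=1}^{n} [C(2n+2m−1, 2m) − C(2n, 2m)]·a^{2m}·(2m−1)!!·B̄^m is bounded by 4nΔt²‖W_s‖²B̄·(1 + 16n²Δt²‖W_s‖²B̄)·exp(8n²Δt²‖W_s‖²B̄); in particular, with T = 2nΔt fixed it is O(Δt). -/

import Mathlib

open scoped Nat

lemma chooseA (N r : ℕ) : ∀ j : ℕ, Nat.choose (N + j) (r + 1) ≤ Nat.choose N (r + 1) + j * Nat.choose (N + j) r := by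
  intro j
  induction j with
  | zero => simp
  | succ k ih =>
    have h1 : Nat.choose (N + (k+1)) (r+1) = Nat.choose (N + k) r + Nat.choose (N + k) (r+1) := by
      have h : N + (k+1) = (N + k) + 1 := by omega
      rw [h, Nat.choose_succ_succ]
    have hmono : Nat.choose (N + k) r ≤ Nat.choose (N + (k+1)) r :=
      Nat.choose_le_choose r (by omega)
    have hmul := Nat.mul_le_mul_left k hmono
    have hexp : (k+1) * Nat.choose (N+(k+1)) r = k * Nat.choose (N+(k+1)) r + Nat.choose (N+(k+1)) r := by ring
    omega

lemma dfact_eq (j : ℕ) : (((2*j+1)‼ : ℕ) : ℝ) * (2^j * (j ! : ℝ)) = ((2*j+1)! : ℝ) := by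
  have h1 : (2*j+1)! = (2*j+1)‼ * (2*j)‼ := by
    simpa using Nat.factorial_eq_mul_doubleFactorial (2*j)
  have h2 : (2*j)‼ = 2^j * j ! := Nat.doubleFactorial_two_mul j
  rw [h2] at h1
  push_cast [h1]
  ring

lemma exp_sum_bound (n : ℕ) {y : ℝ} (hy : 0 ≤ y) :
    ∑ j ∈ Finset.range n, (2*(j:ℝ)+1) * y^j / j ! ≤ (1 + 2*y) * Real.exp y := by
  have hsplit : ∑ j ∈ Finset.range n, (2*(j:ℝ)+1) * y^j / j !
      = (∑ j ∈ Finset.range n, 2*(j:ℝ) * y^j / j !) + ∑ j ∈ Finset.range n, y^j / j ! := by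
    rw [← Finset.sum_add_distrib]
    apply Finset.sum_congr rfl; intro j _; ring
  rw [hsplit]
  have h2 : ∑ j ∈ Finset.range n, y^j / j ! ≤ Real.exp y := Real.sum_le_exp_of_nonneg hy n
  have h1 : (∑ j ∈ Finset.range n, 2*(j:ℝ) * y^j / j !) ≤ 2*y*Real.exp y := by
    cases n with
    | zero => simp; positivity
    | succ k =>
      have hsh : (∑ j ∈ Finset.range (k+1), 2*(j:ℝ) * y^j / j !)
          = ∑ j ∈ Finset.range k, 2*y*(y^j / j !) := by
        rw [Finset.sum_range_succ']
        simp only [Nat.cast_zero, Nat.cast_add, Nat.cast_one]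
        rw [show (2*(0:ℝ)*y^0/((0:ℕ)! : ℝ)) = 0 by simp, add_zero]
        apply Finset.sum_congr rfl
        intro j _
        have hf : ((j+1 : ℕ)! : ℝ) = ((j:ℝ) + 1) * (j ! : ℝ) := by
          push_cast [Nat.factorial_succ]; ring
        rw [hf]
        have hj1 : (j:ℝ) + 1 ≠ 0 := by positivity
        have hf0 : (j ! : ℝ) ≠ 0 := by positivity
        field_simp
        ring
      rw [hsh, ← Finset.mul_sum]
      have hs : ∑ j ∈ Finset.range k, y^j / j ! ≤ Real.exp y := Real.sum_le_exp_of_nonneg hy k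
      have h2y : (0:ℝ) ≤ 2*y := by linarith
      exact mul_le_mul_of_nonneg_left hs h2y
  nlinarith [Real.exp_pos y]

lemma pow_numeral_eq (j : ℕ) : (4:ℝ)^(2*j+1) * 2 = (8:ℝ)^(j+1) * 2^j := by
  have ha : (4:ℝ)^(2*j+1) * 2 = 2^(4*j+3) := by
    rw [show (4:ℝ) = 2^2 by norm_num, ← pow_mul, ← pow_succ]
    congr 1; omega
  have hb : (8:ℝ)^(j+1) * 2^j = 2^(4*j+3) := by
    rw [show (8:ℝ) = 2^3 by norm_num, ← pow_mul, ← pow_add]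
    congr 1; omega
  rw [ha, hb]

theorem type_I_bound (n : ℕ) (hn : 1 ≤ n) (Δt Ws Bbar : ℝ)
    (hΔt : 0 ≤ Δt) (hWs : 0 ≤ Ws) (hB : 0 ≤ Bbar) :
    (∑ m ∈ Finset.Icc 1 n,
        ((Nat.choose (2 * n + 2 * m - 1) (2 * m) : ℝ) - (Nat.choose (2 * n) (2 * m) : ℝ)) *
          (Δt * Ws) ^ (2 * m) * (((2 * m - 1)‼ : ℕ) : ℝ) * Bbar ^ m)
      ≤ 4 * n * Δt ^ 2 * Ws ^ 2 * Bbar * (1 + 16 * n ^ 2 * Δt ^ 2 * Ws ^ 2 * Bbar) *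
          Real.exp (8 * n ^ 2 * Δt ^ 2 * Ws ^ 2 * Bbar) := by
  set a : ℝ := Δt * Ws with ha
  have ha0 : 0 ≤ a := mul_nonneg hΔt hWs
  set y : ℝ := 8 * n ^ 2 * Δt ^ 2 * Ws ^ 2 * Bbar with hy
  have hy0 : 0 ≤ y := by positivity
  have hn0 : (0:ℝ) < n := by exact_mod_cast hn
  have hya : y = 8 * (n:ℝ)^2 * a^2 * Bbar := by rw [hy, ha]; ring
  have hIcc : Finset.Icc 1 n = Finset.Ico 1 (n+1) := (Finset.Ico_add_one_right_eq_Icc _ _).symm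
  rw [hIcc, Finset.sum_Ico_eq_sum_range]
  simp only [Nat.add_sub_cancel]
  have hterm : ∀ j ∈ Finset.range n,
      ((Nat.choose (2 * n + 2 * (1+j) - 1) (2 * (1+j)) : ℝ) - (Nat.choose (2 * n) (2 * (1+j)) : ℝ)) *
          a ^ (2 * (1+j)) * (((2 * (1+j) - 1)‼ : ℕ) : ℝ) * Bbar ^ (1+j)
        ≤ (2*(j:ℝ)+1) * y^(j+1) / (2*n*(j !)) := by
    intro j hj
    have hjn : j < n := Finset.mem_range.mp hj
    have e1 : 2 * n + 2 * (1+j) - 1 = 2*n + (2*j+1) := by omega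
    have e2 : 2 * (1+j) = (2*j+1) + 1 := by omega
    have e3 : 2 * (1+j) - 1 = 2*j+1 := by omega
    rw [e1, e3, e2]
    have hA : (Nat.choose (2*n + (2*j+1)) ((2*j+1)+1) : ℝ) - (Nat.choose (2*n) ((2*j+1)+1) : ℝ)
        ≤ (2*(j:ℝ)+1) * (Nat.choose (2*n + (2*j+1)) (2*j+1) : ℝ) := by
      have h := chooseA (2*n) (2*j+1) (2*j+1)
      have h' : (Nat.choose (2*n + (2*j+1)) ((2*j+1)+1) : ℝ)
          ≤ (Nat.choose (2*n) ((2*j+1)+1) : ℝ)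
            + ((2*j+1 : ℕ) : ℝ) * (Nat.choose (2*n + (2*j+1)) (2*j+1) : ℝ) := by
        exact_mod_cast h
      push_cast at h'
      linarith
    have hC : (Nat.choose (2*n + (2*j+1)) (2*j+1) : ℝ)
        ≤ (4*(n:ℝ)) ^ (2*j+1) / ((2*j+1)! : ℝ) := by
      calc (Nat.choose (2*n + (2*j+1)) (2*j+1) : ℝ)
          ≤ ((2*n + (2*j+1) : ℕ) : ℝ) ^ (2*j+1) / ((2*j+1)! : ℝ) := by
            have := Nat.choose_le_pow_div (α := ℝ) (2*j+1) (2*n + (2*j+1))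
            simpa [Nat.cast_pow] using this
        _ ≤ (4*(n:ℝ)) ^ (2*j+1) / ((2*j+1)! : ℝ) := by
            have hb : ((2*n + (2*j+1) : ℕ) : ℝ) ≤ 4*(n:ℝ) := by
              push_cast
              have : (j:ℝ) + 1 ≤ n := by exact_mod_cast hjn
              linarith
            gcongr
    have hD : (((2*j+1)‼ : ℕ) : ℝ) = ((2*j+1)! : ℝ) / (2^j * (j ! : ℝ)) := by
      rw [← dfact_eq j]
      field_simp
    have hfac0 : (0:ℝ) ≤ a ^ ((2*j+1)+1) * (((2*j+1)‼ : ℕ) : ℝ) * Bbar ^ (1+j) := by positivity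
    calc ((Nat.choose (2*n + (2*j+1)) ((2*j+1)+1) : ℝ) - (Nat.choose (2*n) ((2*j+1)+1) : ℝ)) *
            a ^ ((2*j+1)+1) * (((2*j+1)‼ : ℕ) : ℝ) * Bbar ^ (1+j)
        = ((Nat.choose (2*n + (2*j+1)) ((2*j+1)+1) : ℝ) - (Nat.choose (2*n) ((2*j+1)+1) : ℝ)) *
            (a ^ ((2*j+1)+1) * (((2*j+1)‼ : ℕ) : ℝ) * Bbar ^ (1+j)) := by ring
      _ ≤ ((2*(j:ℝ)+1) * (Nat.choose (2*n + (2*j+1)) (2*j+1) : ℝ)) *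
            (a ^ ((2*j+1)+1) * (((2*j+1)‼ : ℕ) : ℝ) * Bbar ^ (1+j)) :=
          mul_le_mul_of_nonneg_right hA hfac0
      _ ≤ ((2*(j:ℝ)+1) * ((4*(n:ℝ)) ^ (2*j+1) / ((2*j+1)! : ℝ))) *
            (a ^ ((2*j+1)+1) * (((2*j+1)‼ : ℕ) : ℝ) * Bbar ^ (1+j)) := by
          apply mul_le_mul_of_nonneg_right _ (by positivity)
          apply mul_le_mul_of_nonneg_left hC (by positivity)
      _ = (2*(j:ℝ)+1) * y^(j+1) / (2*n*(j !)) := by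
          rw [hD, hya]
          have hf1 : ((2*j+1)! : ℝ) ≠ 0 := by positivity
          have hf2 : (j ! : ℝ) ≠ 0 := by positivity
          have h2j : (2:ℝ)^j ≠ 0 := by positivity
          have hnne : (n:ℝ) ≠ 0 := ne_of_gt hn0
          have hpy : (8 * (n:ℝ)^2 * a^2 * Bbar)^(j+1)
              = 8^(j+1) * ((n:ℝ)^2)^(j+1) * (a^2)^(j+1) * Bbar^(j+1) := by
            rw [mul_pow, mul_pow, mul_pow]
          have hp4 : (4*(n:ℝ))^(2*j+1) = 4^(2*j+1) * (n:ℝ)^(2*j+1) := mul_pow _ _ _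
          rw [hpy, hp4]
          have hnn : ((n:ℝ)^2)^(j+1) = (n:ℝ)^(2*j+1) * n := by
            rw [← pow_mul, show 2*(j+1) = (2*j+1)+1 from by ring, pow_succ]
          have haa : (a^2)^(j+1) = a^((2*j+1)+1) := by
            rw [← pow_mul, show 2*(j+1) = (2*j+1)+1 from by ring]
          have hbb : Bbar^(j+1) = Bbar^(1+j) := by rw [add_comm]
          rw [hnn, haa, hbb]
          rw [show (4:ℝ)^(2*j+1) = 8^(j+1)*2^j/2 from by rw [← pow_numeral_eq j]; ring]
          field_simp
    -- end of calc
  calc (∑ j ∈ Finset.range n,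
        ((Nat.choose (2 * n + 2 * (1+j) - 1) (2 * (1+j)) : ℝ) - (Nat.choose (2 * n) (2 * (1+j)) : ℝ)) *
          a ^ (2 * (1+j)) * (((2 * (1+j) - 1)‼ : ℕ) : ℝ) * Bbar ^ (1+j))
      ≤ ∑ j ∈ Finset.range n, (2*(j:ℝ)+1) * y^(j+1) / (2*n*(j !)) := Finset.sum_le_sum hterm
    _ = y/(2*n) * ∑ j ∈ Finset.range n, (2*(j:ℝ)+1) * y^j / j ! := by
        rw [Finset.mul_sum]
        apply Finset.sum_congr rfl
        intro j _
        have hf2 : (j ! : ℝ) ≠ 0 := by positivity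
        have hnne : (n:ℝ) ≠ 0 := ne_of_gt hn0
        rw [pow_succ]
        field_simp
    _ ≤ y/(2*n) * ((1 + 2*y) * Real.exp y) := by
        apply mul_le_mul_of_nonneg_left (exp_sum_bound n hy0) (by positivity)
    _ = 4 * n * Δt ^ 2 * Ws ^ 2 * Bbar * (1 + 16 * n ^ 2 * Δt ^ 2 * Ws ^ 2 * Bbar) *
          Real.exp (8 * n ^ 2 * Δt ^ 2 * Ws ^ 2 * Bbar) := by
        rw [hy]
        have hnne : (n:ℝ) ≠ 0 := ne_of_gt hn0
        field_simp
        ring
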